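/- arXiv:2309.00499 — 2 statements merged into one kernel-verified Lean document; each statement's English description precedes it below -/
import Mathlib

section
/- Let B be a Banach space, L the left shift on B-valued sequences, and p ≥ 0 an integer. The inductively defined norm ‖u‖_{p/2}² = Σ_{n≥0} ‖Lⁿ u‖_{(p-1)/2}² (with ‖u‖₀² = Σ_j ‖u_j‖²) is equivalent to the weighted norm Σ_{j≥0} (1+j)^p ‖u_j‖²; specifically (1/p!) Σ_j (1+j)^p ‖u_j‖² ≤ ‖u‖_{p/2}² ≤ Σ_j (1+j)^p ‖u_j‖². -/
open scoped ENNReal NNReal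

private theorem pow_succ_le_aux (m n : ℕ) :
    (m + 1) ^ (n + 1) ≤ m ^ (n + 1) + (n + 1) * (m + 1) ^ n := by
  induction n with
  | zero => simp
  | succ n ih =>
    calc (m + 1) ^ (n + 2) = (m + 1) * (m + 1) ^ (n + 1) := by ring
    _ ≤ (m + 1) * (m ^ (n + 1) + (n + 1) * (m + 1) ^ n) := by
        exact Nat.mul_le_mul_left _ ih
    _ = m ^ (n + 2) + m ^ (n + 1) + (n + 1) * (m + 1) ^ (n + 1) := by ring
    _ ≤ m ^ (n + 2) + (m + 1) ^ (n + 1) + (n + 1) * (m + 1) ^ (n + 1) := by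
        gcongr
        omega
    _ = m ^ (n + 2) + (n + 2) * (m + 1) ^ (n + 1) := by ring

private theorem nat_sum_pow_lb (p k : ℕ) :
    (k + 1) ^ (p + 1) ≤ (p + 1) * ∑ j ∈ Finset.range (k + 1), (j + 1) ^ p := by
  induction k with
  | zero => simp
  | succ k ih =>
    rw [Finset.sum_range_succ, Nat.mul_add]
    calc (k + 2) ^ (p + 1) ≤ (k + 1) ^ (p + 1) + (p + 1) * (k + 2) ^ p :=
          pow_succ_le_aux (k + 1) p
    _ ≤ (p + 1) * ∑ j ∈ Finset.range (k + 1), (j + 1) ^ p + (p + 1) * (k + 1 + 1) ^ p := by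
        gcongr

private theorem myrearr (F : ℕ → ℕ → ℝ≥0∞) :
    ∑' n, ∑' j, F n j = ∑' k, ∑ kl ∈ Finset.HasAntidiagonal.antidiagonal k, F kl.1 kl.2 := by
  rw [← ENNReal.tsum_prod, ← Finset.HasAntidiagonal.sigmaAntidiagonalEquivProd.tsum_eq,
    ENNReal.tsum_sigma']
  refine tsum_congr fun k => ?_
  simp only [Finset.HasAntidiagonal.sigmaAntidiagonalEquivProd_apply]
  exact Finset.tsum_subtype (Finset.HasAntidiagonal.antidiagonal k) (fun kl => F kl.1 kl.2)

private theorem antidiag_snd (h : ℕ → ℝ≥0∞) (k : ℕ) :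
    ∑ kl ∈ Finset.HasAntidiagonal.antidiagonal k, h kl.2 = ∑ j ∈ Finset.range (k + 1), h j := by
  rw [Finset.Nat.sum_antidiagonal_eq_sum_range_succ_mk]
  simpa using Finset.sum_range_reflect h (k + 1)

/-- The hierarchy of norms (squared) induced by the left translation on `B`-valued
sequences: `N u 0 = ∑ ‖u j‖²` and `N u (p+1) = ∑ₙ N (Lⁿ u) p`, where `(L u) j = u (j+1)`. -/
noncomputable def leftShiftNormSq {B : Type*} [NormedAddCommGroup B] :
    ℕ → (ℕ → B) → ℝ≥0∞
  | 0, u => ∑' j, (‖u j‖₊ : ℝ≥0∞) ^ 2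
  | (p + 1), u => ∑' n, leftShiftNormSq p (fun j => u (n + j))

/-- Equivalence of the inductively defined norm with the polynomially weighted `ℓ²` norm:
`(1/p!) ∑_j (1+j)^p ‖u_j‖² ≤ ‖u‖²_{p/2} ≤ ∑_j (1+j)^p ‖u_j‖²` (in the extended reals). -/
theorem leftShiftNormSq_equiv_weighted {B : Type*} [NormedAddCommGroup B]
    (p : ℕ) (u : ℕ → B) :
    (p.factorial : ℝ≥0∞)⁻¹ * ∑' j, ((1 + j : ℕ) : ℝ≥0∞) ^ p * (‖u j‖₊ : ℝ≥0∞) ^ 2 ≤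
        leftShiftNormSq p u ∧
      leftShiftNormSq p u ≤ ∑' j, ((1 + j : ℕ) : ℝ≥0∞) ^ p * (‖u j‖₊ : ℝ≥0∞) ^ 2 := by
  induction p generalizing u with
  | zero => simp [leftShiftNormSq]
  | succ p ih =>
    have key : ∑' n, ∑' j, ((1 + j : ℕ) : ℝ≥0∞) ^ p * (‖u (n + j)‖₊ : ℝ≥0∞) ^ 2
        = ∑' k, (∑ j ∈ Finset.range (k + 1), ((1 + j : ℕ) : ℝ≥0∞) ^ p)
            * (‖u k‖₊ : ℝ≥0∞) ^ 2 := by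
      rw [myrearr (fun n j => ((1 + j : ℕ) : ℝ≥0∞) ^ p * (‖u (n + j)‖₊ : ℝ≥0∞) ^ 2)]
      refine tsum_congr fun k => ?_
      have hc : ∀ kl ∈ Finset.HasAntidiagonal.antidiagonal k,
          ((1 + kl.2 : ℕ) : ℝ≥0∞) ^ p * (‖u (kl.1 + kl.2)‖₊ : ℝ≥0∞) ^ 2
            = ((1 + kl.2 : ℕ) : ℝ≥0∞) ^ p * (‖u k‖₊ : ℝ≥0∞) ^ 2 := by
        intro kl hkl
        rw [Finset.HasAntidiagonal.mem_antidiagonal.mp hkl]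
      rw [Finset.sum_congr rfl hc, ← Finset.sum_mul,
        antidiag_snd (fun j => ((1 + j : ℕ) : ℝ≥0∞) ^ p) k]
    constructor
    · -- lower bound
      show (((p + 1).factorial : ℝ≥0∞))⁻¹ * _ ≤ ∑' n, leftShiftNormSq p (fun j => u (n + j))
      have h1 : ∑' n, (p.factorial : ℝ≥0∞)⁻¹ *
          ∑' j, ((1 + j : ℕ) : ℝ≥0∞) ^ p * (‖u (n + j)‖₊ : ℝ≥0∞) ^ 2 ≤
          ∑' n, leftShiftNormSq p (fun j => u (n + j)) :=
        ENNReal.tsum_le_tsum fun n => (ih (fun j => u (n + j))).1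
      refine le_trans ?_ h1
      rw [ENNReal.tsum_mul_left, key]
      have hfac : (((p + 1).factorial : ℝ≥0∞))⁻¹
          = (p.factorial : ℝ≥0∞)⁻¹ * (((p : ℝ≥0∞) + 1))⁻¹ := by
        rw [Nat.factorial_succ, ← ENNReal.mul_inv (by simp) (by simp)]
        push_cast
        ring_nf
      rw [hfac, mul_assoc]
      gcongr
      rw [← ENNReal.tsum_mul_left]
      refine ENNReal.tsum_le_tsum fun k => ?_
      rw [← mul_assoc]
      gcongr
      have hnat := nat_sum_pow_lb p k
      have hcast : ((1 + k : ℕ) : ℝ≥0∞) ^ (p + 1) ≤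
          ((p : ℝ≥0∞) + 1) * ∑ j ∈ Finset.range (k + 1), ((1 + j : ℕ) : ℝ≥0∞) ^ p := by
        calc ((1 + k : ℕ) : ℝ≥0∞) ^ (p + 1)
            = (((k + 1) ^ (p + 1) : ℕ) : ℝ≥0∞) := by push_cast; ring_nf
        _ ≤ ((((p + 1) * ∑ j ∈ Finset.range (k + 1), (j + 1) ^ p : ℕ)) : ℝ≥0∞) := by
            exact_mod_cast hnat
        _ = ((p : ℝ≥0∞) + 1) * ∑ j ∈ Finset.range (k + 1), ((1 + j : ℕ) : ℝ≥0∞) ^ p := by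
            push_cast; ring_nf
      calc ((p : ℝ≥0∞) + 1)⁻¹ * ((1 + k : ℕ) : ℝ≥0∞) ^ (p + 1)
          ≤ ((p : ℝ≥0∞) + 1)⁻¹ * (((p : ℝ≥0∞) + 1) *
            ∑ j ∈ Finset.range (k + 1), ((1 + j : ℕ) : ℝ≥0∞) ^ p) := by gcongr
      _ = (((p : ℝ≥0∞) + 1)⁻¹ * ((p : ℝ≥0∞) + 1)) *
            ∑ j ∈ Finset.range (k + 1), ((1 + j : ℕ) : ℝ≥0∞) ^ p := by rw [mul_assoc]
      _ = ∑ j ∈ Finset.range (k + 1), ((1 + j : ℕ) : ℝ≥0∞) ^ p := by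
            rw [ENNReal.inv_mul_cancel (by simp) (by simp), one_mul]
    · -- upper bound
      show (∑' n, leftShiftNormSq p (fun j => u (n + j))) ≤ _
      have h1 : ∑' n, leftShiftNormSq p (fun j => u (n + j)) ≤
          ∑' n, ∑' j, ((1 + j : ℕ) : ℝ≥0∞) ^ p * (‖u (n + j)‖₊ : ℝ≥0∞) ^ 2 :=
        ENNReal.tsum_le_tsum fun n => (ih (fun j => u (n + j))).2
      refine h1.trans ?_
      rw [key]
      refine ENNReal.tsum_le_tsum fun k => ?_
      gcongr
      calc ∑ j ∈ Finset.range (k + 1), ((1 + j : ℕ) : ℝ≥0∞) ^ p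
          ≤ ∑ _j ∈ Finset.range (k + 1), ((1 + k : ℕ) : ℝ≥0∞) ^ p := by
            refine Finset.sum_le_sum fun j hj => ?_
            gcongr
            have := Finset.mem_range.mp hj; omega
      _ = ((1 + k : ℕ) : ℝ≥0∞) ^ (p + 1) := by
            rw [Finset.sum_const, Finset.card_range, nsmul_eq_mul, pow_succ]
            push_cast; ring
end

section
/- Let L be the left shift operator on complex sequences, a ∈ l², c ∈ l^{2,1} (meaning Σ_j (1+j)² |c_j|² < ∞), and λ ∈ ℂ with |λ| ≥ 1. If (λ − L)a = c, then there exists a constant M > 0, independent of λ, such that ‖a‖_{l²} ≤ M ‖c‖_{l^{2,1}}. -/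
open scoped NNReal

open Finset Filter

private lemma tele1 {u v : ℝ} (hu : 0 ≤ u) (huv : u ≤ v) (h : v^2 - u^2 = 1) :
    v⁻¹ ≤ 2*(v-u) := by
  have hv : 0 < v := by nlinarith
  rw [inv_eq_one_div, div_le_iff₀ hv]
  nlinarith [sq_nonneg (v - u)]

private lemma tele2 {u v : ℝ} (hu : 1 ≤ u) (huv : u ≤ v) (h : v^2 - u^2 = 1) :
    (v^2*v)⁻¹ ≤ 2*(u⁻¹ - v⁻¹) := by
  have hu0 : 0 < u := by linarith
  have hv : 0 < v := by linarith
  have h1 : u⁻¹ - v⁻¹ = (v - u)/(u*v) := by field_simp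
  rw [h1, inv_eq_one_div, mul_div_assoc', div_le_div_iff₀ (by positivity) (by positivity)]
  nlinarith [sq_nonneg (v-u), mul_pos hu0 hv]

/-- partial sums of `1/√(1+j)` -/
private lemma sum_inv_sqrt_le (i : ℕ) :
    ∑ j ∈ range (i+1), (Real.sqrt (1+(j:ℝ)))⁻¹ ≤ 2 * Real.sqrt (1+(i:ℝ)) := by
  have key : ∀ j : ℕ, (Real.sqrt (1+(j:ℝ)))⁻¹ ≤
      (fun k : ℕ => 2*Real.sqrt (k:ℝ)) (j+1) - (fun k : ℕ => 2*Real.sqrt (k:ℝ)) j := by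
    intro j
    have h := tele1 (u := Real.sqrt (j:ℝ)) (v := Real.sqrt ((j:ℝ)+1))
      (Real.sqrt_nonneg _) (Real.sqrt_le_sqrt (by linarith))
      (by rw [Real.sq_sqrt (by positivity), Real.sq_sqrt (by positivity)]; ring)
    simp only [Nat.cast_add, Nat.cast_one]
    rw [show (1:ℝ)+(j:ℝ) = (j:ℝ)+1 by ring]
    linarith
  calc ∑ j ∈ range (i+1), (Real.sqrt (1+(j:ℝ)))⁻¹
      ≤ ∑ j ∈ range (i+1), ((fun k : ℕ => 2*Real.sqrt (k:ℝ)) (j+1) - (fun k : ℕ => 2*Real.sqrt (k:ℝ)) j) :=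
        Finset.sum_le_sum (fun j _ => key j)
    _ = 2*Real.sqrt (((i+1:ℕ)):ℝ) - 2*Real.sqrt ((0:ℕ):ℝ) :=
        Finset.sum_range_sub (fun k : ℕ => 2*Real.sqrt (k:ℝ)) (i+1)
    _ ≤ 2 * Real.sqrt (1+(i:ℝ)) := by
        simp only [Nat.cast_zero, Real.sqrt_zero, Nat.cast_add, Nat.cast_one]
        rw [show (1:ℝ)+(i:ℝ) = (i:ℝ)+1 by ring]; linarith
private noncomputable def sR (k : ℕ) : ℝ := Real.sqrt (1+(k:ℝ))
private noncomputable def WR (k : ℕ) : ℝ := (1+(k:ℝ)) * sR k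

private lemma sR_pos (k : ℕ) : 0 < sR k := Real.sqrt_pos.2 (by positivity)
private lemma sR_one_le (k : ℕ) : 1 ≤ sR k := by
  calc (1:ℝ) = Real.sqrt 1 := by simp
    _ ≤ sR k := Real.sqrt_le_sqrt (by simp [Nat.cast_nonneg])

private lemma WR_pos (k : ℕ) : 0 < WR k := by
  have := sR_pos k; rw [WR]; positivity

private lemma WR_one_le (k : ℕ) : 1 ≤ WR k := by
  have h := sR_one_le k
  have h2 : (1:ℝ) ≤ 1 + (k:ℝ) := by simp [Nat.cast_nonneg]
  calc (1:ℝ) = 1*1 := by ring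
    _ ≤ (1+(k:ℝ)) * sR k := by apply mul_le_mul h2 h (by norm_num) (by linarith)

private lemma sq_sR (k : ℕ) : sR k * sR k = 1 + (k:ℝ) := Real.mul_self_sqrt (by positivity)

/-- key telescoping step for the `(1+k)^{-3/2}` tail -/
private lemma invWR_succ_le (k : ℕ) : (WR (k+1))⁻¹ ≤ 2 * ((sR k)⁻¹ - (sR (k+1))⁻¹) := by
  have h := tele2 (u := sR k) (v := sR (k+1)) (sR_one_le k)
    (by rw [sR, sR]; exact Real.sqrt_le_sqrt (by push_cast; linarith))
    (by rw [sR, sR, Real.sq_sqrt (by positivity), Real.sq_sqrt (by positivity)]; push_cast; ring)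
  have h2 : (sR (k+1))^2 * sR (k+1) = WR (k+1) := by
    rw [sR, WR, Real.sq_sqrt (by positivity), sR]
  rw [← h2]; exact h

/-- partial sums of `(1+(j+n))^{-3/2}` bounded by `3/√(1+j)` -/
private lemma sum_invWR_le (j N : ℕ) :
    ∑ n ∈ range N, (WR (j+n))⁻¹ ≤ 3 * (sR j)⁻¹ := by
  have hψ : ∀ k, 0 < (sR k)⁻¹ := fun k => inv_pos.2 (sR_pos k)
  cases N with
  | zero => have := sR_pos j; simp; positivity
  | succ N =>
    rw [Finset.sum_range_succ']
    have hfirst : (WR (j+0))⁻¹ ≤ (sR j)⁻¹ := by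
      simp only [Nat.add_zero]
      apply inv_anti₀ (sR_pos j)
      rw [WR]
      calc sR j = 1 * sR j := by ring
        _ ≤ (1+(j:ℝ)) * sR j := by
            apply mul_le_mul_of_nonneg_right (by simp [Nat.cast_nonneg]) (le_of_lt (sR_pos j))
    have htail : ∑ n ∈ range N, (WR (j+(n+1)))⁻¹ ≤ 2 * (sR j)⁻¹ := by
      calc ∑ n ∈ range N, (WR (j+(n+1)))⁻¹
          ≤ ∑ n ∈ range N, ((fun m : ℕ => 2*(sR (j+m))⁻¹) n - (fun m : ℕ => 2*(sR (j+m))⁻¹) (n+1)) := by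
            apply Finset.sum_le_sum
            intro n _
            have := invWR_succ_le (j+n)
            simp only []
            rw [show j+(n+1) = (j+n)+1 by omega]
            linarith
        _ = 2*(sR (j+0))⁻¹ - 2*(sR (j+N))⁻¹ := Finset.sum_range_sub' (fun m : ℕ => 2*(sR (j+m))⁻¹) N
        _ ≤ 2 * (sR j)⁻¹ := by
            have := hψ (j+N)
            simp only [Nat.add_zero]
            linarith
    linarith
open scoped ENNReal in
/-- weighted AM-GM in `ℝ≥0∞` -/
private lemma amgm (x y w : ℝ≥0∞) (hw0 : w ≠ 0) (hwt : w ≠ ⊤) :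
    x * y ≤ w * x^2 + w⁻¹ * y^2 := by
  rcases le_total y (w*x) with h | h
  · calc x*y ≤ x*(w*x) := mul_le_mul_right h x
      _ = w*x^2 := by ring
      _ ≤ w*x^2 + w⁻¹*y^2 := le_self_add
  · have hx : x ≤ w⁻¹ * y := by
      calc x = w⁻¹ * w * x := by rw [ENNReal.inv_mul_cancel hw0 hwt, one_mul]
        _ = w⁻¹ * (w * x) := by ring
        _ ≤ w⁻¹ * y := mul_le_mul_right h w⁻¹
    calc x*y ≤ (w⁻¹*y)*y := mul_le_mul_left hx y
      _ = w⁻¹*y^2 := by ring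
      _ ≤ w*x^2 + w⁻¹*y^2 := le_add_self
open scoped ENNReal in
private lemma copson (K : ℕ → ℝ) (hK0 : ∀ i, 0 ≤ K i) (hKs : Summable K)
    (hK2 : Summable (fun i : ℕ => (1+(i:ℝ))^2 * K i ^2))
    (A : ℕ → ℝ) (hA0 : ∀ j, 0 ≤ A j) (hAs : Summable (fun j => A j ^2))
    (hAle : ∀ j, A j ≤ ∑' m, K (j+m)) :
    ∑' j, A j ^2 ≤ 12 * ∑' i : ℕ, (1+(i:ℝ))^2 * K i^2 := by
  have hKshift : ∀ j, Summable (fun m => K (j+m)) := fun j =>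
    ((summable_nat_add_iff j).2 hKs).congr (fun n => by rw [add_comm])
  set F : ℕ → ℝ≥0∞ := fun i => ENNReal.ofReal (K i) with hF
  set T : ℕ → ℝ≥0∞ := fun j => ∑' m, F (j+m) with hTdef
  have hT : ∀ j, ENNReal.ofReal (∑' m, K (j+m)) = T j := fun j =>
    ENNReal.ofReal_tsum_of_nonneg (fun m => hK0 _) (hKshift j)
  set 𝕎 : ℕ → ℝ≥0∞ := fun k => ENNReal.ofReal (WR k) with hWdef
  have hW0 : ∀ k, 𝕎 k ≠ 0 := fun k => (ENNReal.ofReal_pos.2 (WR_pos k)).ne'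
  have hWt : ∀ k, 𝕎 k ≠ ⊤ := fun k => ENNReal.ofReal_ne_top
  set v : ℕ → ℝ≥0∞ := fun i => 𝕎 i * F i ^ 2 with hvdef
  set P : ℕ → ℝ≥0∞ := fun j => ∑' m, v (j+m) with hPdef
  set Q : ℕ → ℝ≥0∞ := fun j => ∑' n, (𝕎 (j+n))⁻¹ with hQdef
  -- tail bound for Q
  have hQsum : ∀ j, Summable (fun n => (WR (j+n))⁻¹) := fun j =>
    summable_of_sum_range_le (fun n => inv_nonneg.2 (WR_pos _).le) (fun N => sum_invWR_le j N)
  have hQ : ∀ j, Q j ≤ ENNReal.ofReal (3 * (sR j)⁻¹) := by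
    intro j
    have e1 : Q j = ENNReal.ofReal (∑' n, (WR (j+n))⁻¹) := by
      rw [ENNReal.ofReal_tsum_of_nonneg (fun n => inv_nonneg.2 (WR_pos _).le) (hQsum j)]
      exact tsum_congr fun n => (ENNReal.ofReal_inv_of_pos (WR_pos _)).symm
    rw [e1]
    exact ENNReal.ofReal_le_ofReal
      (Summable.tsum_le_of_sum_range_le (hQsum j) (fun N => sum_invWR_le j N))
  -- T j ^ 2 ≤ 2 * (P j * Q j)
  have hTsq : ∀ j, T j ^2 ≤ 2 * (P j * Q j) := by
    intro j
    have hpt : ∀ m n, F (j+m) * F (j+n) ≤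
        𝕎 (j+m) * (𝕎 (j+n))⁻¹ * F (j+m)^2 + 𝕎 (j+n) * (𝕎 (j+m))⁻¹ * F (j+n)^2 := by
      intro m n
      have h := amgm (F (j+m)) (F (j+n)) (𝕎 (j+m) * (𝕎 (j+n))⁻¹)
        (mul_ne_zero (hW0 _) (ENNReal.inv_ne_zero.2 (hWt _)))
        (ENNReal.mul_ne_top (hWt _) (ENNReal.inv_ne_top.2 (hW0 _)))
      rwa [ENNReal.mul_inv (Or.inl (hW0 _)) (Or.inl (hWt _)), inv_inv,
        mul_comm ((𝕎 (j+m))⁻¹)] at h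
    calc T j ^2 = ∑' m, ∑' n, F (j+m) * F (j+n) := by
          rw [sq, hTdef]
          simp only []
          rw [← ENNReal.tsum_mul_right]
          exact tsum_congr fun m => by rw [← ENNReal.tsum_mul_left]
      _ ≤ ∑' m, ∑' n, (𝕎 (j+m) * (𝕎 (j+n))⁻¹ * F (j+m)^2
            + 𝕎 (j+n) * (𝕎 (j+m))⁻¹ * F (j+n)^2) :=
          ENNReal.tsum_le_tsum fun m => ENNReal.tsum_le_tsum fun n => hpt m n
      _ = ∑' m, ((𝕎 (j+m) * F (j+m)^2) * Q j + (𝕎 (j+m))⁻¹ * P j) := by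
          refine tsum_congr fun m => ?_
          rw [ENNReal.tsum_add]
          congr 1
          · rw [hQdef]; simp only []
            rw [← ENNReal.tsum_mul_left]
            exact tsum_congr fun n => by ring
          · rw [hPdef]; simp only []
            rw [← ENNReal.tsum_mul_left]
            exact tsum_congr fun n => by rw [hvdef]; ring
      _ = P j * Q j + Q j * P j := by
          rw [ENNReal.tsum_add, ENNReal.tsum_mul_right, ENNReal.tsum_mul_right]
      _ = 2*(P j * Q j) := by ring
  -- reindex/swap step
  set G : ℕ → ℕ → ℝ≥0∞ :=
    fun j i => if j ≤ i then ENNReal.ofReal ((sR j)⁻¹) * v i else 0 with hGdef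
  have hswap : ∑' j, ENNReal.ofReal ((sR j)⁻¹) * P j
      = ∑' i : ℕ, ∑' j : ℕ, G j i := by
    rw [← ENNReal.tsum_comm]
    refine tsum_congr fun j => ?_
    have hinj : Function.Injective (fun m : ℕ => j + m) := fun x y h => Nat.add_left_cancel h
    have hsupp : Function.support (G j) ⊆ Set.range (fun m : ℕ => j + m) := by
      intro i hi
      rw [Function.mem_support, hGdef] at hi
      by_cases h : j ≤ i
      · exact ⟨i - j, show j + (i - j) = i by omega⟩
      · simp [h] at hi
    rw [← hinj.tsum_eq hsupp]
    rw [hPdef]; simp only []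
    rw [← ENNReal.tsum_mul_left]
    exact (tsum_congr fun m => by rw [hGdef]; simp [Nat.le_add_right]).symm
  have hinner : ∀ i, (∑' j, G j i) ≤ ENNReal.ofReal (2 * sR i) * v i := by
    intro i
    have e1 : (∑' j, G j i) = ∑ j ∈ Finset.range (i+1), G j i := by
      refine tsum_eq_sum fun j hj => ?_
      rw [Finset.mem_range] at hj
      rw [hGdef]; simp only []
      rw [if_neg (by omega)]
    rw [e1]
    have e2 : ∑ j ∈ Finset.range (i+1), G j i
        = (∑ j ∈ Finset.range (i+1), ENNReal.ofReal ((sR j)⁻¹)) * v i := by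
      rw [Finset.sum_mul]
      refine Finset.sum_congr rfl fun j hj => ?_
      rw [Finset.mem_range] at hj
      rw [hGdef]; simp only []
      rw [if_pos (by omega)]
    rw [e2]
    apply mul_le_mul_left
    have e3 : ∑ j ∈ Finset.range (i+1), ENNReal.ofReal ((sR j)⁻¹)
        = ENNReal.ofReal (∑ j ∈ Finset.range (i+1), (sR j)⁻¹) := by
      rw [ENNReal.ofReal_sum_of_nonneg (fun j _ => inv_nonneg.2 (sR_pos j).le)]
    rw [e3]
    exact ENNReal.ofReal_le_ofReal (sum_inv_sqrt_le i)
  have hfinal : ∀ i, ENNReal.ofReal (2 * sR i) * v i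
      = 2 * ENNReal.ofReal ((1+(i:ℝ))^2 * K i ^2) := by
    intro i
    have h1 : (0:ℝ) ≤ WR i := (WR_pos i).le
    have h2 : (0:ℝ) ≤ 2 * sR i := by have := (sR_pos i).le; positivity
    have h3 : 2*sR i*(WR i*K i^2) = 2*((1+(i:ℝ))^2*K i^2) := by
      rw [WR, ← sq_sR i]; ring
    rw [hvdef]; simp only []
    rw [hWdef]; simp only []
    rw [hF]; simp only []
    rw [← ENNReal.ofReal_pow (hK0 i), ← ENNReal.ofReal_mul h1, ← ENNReal.ofReal_mul h2, h3,
      ENNReal.ofReal_mul (by norm_num), ENNReal.ofReal_ofNat]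
  -- put everything together
  have main : ENNReal.ofReal (∑' j, A j ^2)
      ≤ ENNReal.ofReal (12 * ∑' i : ℕ, (1+(i:ℝ))^2 * K i ^2) := by
    calc ENNReal.ofReal (∑' j, A j ^2) = ∑' j, ENNReal.ofReal (A j ^2) :=
          ENNReal.ofReal_tsum_of_nonneg (fun j => sq_nonneg _) hAs
      _ ≤ ∑' j, T j ^2 := by
          refine ENNReal.tsum_le_tsum fun j => ?_
          rw [ENNReal.ofReal_pow (hA0 j)]
          exact pow_le_pow_left' (le_trans (ENNReal.ofReal_le_ofReal (hAle j)) (hT j).le) 2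
      _ ≤ ∑' j, 2 * (P j * Q j) := ENNReal.tsum_le_tsum hTsq
      _ ≤ ∑' j, 2 * (P j * ENNReal.ofReal (3 * (sR j)⁻¹)) :=
          ENNReal.tsum_le_tsum fun j =>
            mul_le_mul_right (mul_le_mul_right (hQ j) (P j)) 2
      _ = ∑' j, 6 * (ENNReal.ofReal ((sR j)⁻¹) * P j) := by
          refine tsum_congr fun j => ?_
          rw [ENNReal.ofReal_mul (by norm_num), ENNReal.ofReal_ofNat]
          ring
      _ = 6 * ∑' j, ENNReal.ofReal ((sR j)⁻¹) * P j := ENNReal.tsum_mul_left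
      _ = 6 * ∑' i : ℕ, ∑' j : ℕ, G j i := by rw [hswap]
      _ ≤ 6 * ∑' i : ℕ, ENNReal.ofReal (2 * sR i) * v i :=
          mul_le_mul_right (ENNReal.tsum_le_tsum hinner) 6
      _ = 6 * ∑' i : ℕ, 2 * ENNReal.ofReal ((1+(i:ℝ))^2 * K i ^2) := by
          rw [tsum_congr hfinal]
      _ = 12 * ∑' i : ℕ, ENNReal.ofReal ((1+(i:ℝ))^2 * K i ^2) := by
          rw [ENNReal.tsum_mul_left, ← mul_assoc]
          norm_num
      _ = ENNReal.ofReal (12 * ∑' i : ℕ, (1+(i:ℝ))^2 * K i ^2) := by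
          rw [ENNReal.ofReal_mul (by norm_num), ENNReal.ofReal_ofNat,
            ENNReal.ofReal_tsum_of_nonneg (fun i => by positivity) hK2]
  have hnn : (0:ℝ) ≤ 12 * ∑' i : ℕ, (1+(i:ℝ))^2 * K i ^2 := by
    have : (0:ℝ) ≤ ∑' i : ℕ, (1+(i:ℝ))^2 * K i ^2 := tsum_nonneg fun i => by positivity
    linarith
  rw [ENNReal.ofReal_le_ofReal_iff hnn] at main
  exact main
private lemma summable_norm_of_weighted (K : ℕ → ℝ) (hK0 : ∀ i, 0 ≤ K i)
    (hK2 : Summable (fun i : ℕ => (1+(i:ℝ))^2 * K i ^2)) : Summable K := by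
  have hinv : Summable (fun i : ℕ => ((1+(i:ℝ))^2)⁻¹) := by
    have h : Summable (fun n : ℕ => 1 / (n:ℝ)^2) := Real.summable_one_div_nat_pow.2 (by norm_num)
    have h2 := (summable_nat_add_iff 1).2 h
    apply h2.congr
    intro n
    push_cast
    rw [one_div, add_comm]
  have hsum := (hK2.add hinv).mul_left (1/2)
  apply Summable.of_nonneg_of_le hK0 (fun i => ?_) hsum
  have hu : (1:ℝ) ≤ 1+(i:ℝ) := by simp [Nat.cast_nonneg]
  have hup : (0:ℝ) < (1+(i:ℝ))^2 := by positivity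
  have hmc : (1+(i:ℝ))^2 * ((1+(i:ℝ))^2)⁻¹ = 1 := mul_inv_cancel₀ (ne_of_gt hup)
  have hsq := sq_nonneg ((1+(i:ℝ))^2 * K i - 1)
  have hK := hK0 i
  nlinarith [mul_pos hup hup]
/-- Resolvent estimate for the left translation on `l²(ℕ; ℂ)` up to the unit circle:
there is `M > 0` independent of `λ` such that if `|λ| ≥ 1`, `a ∈ l²`, `c ∈ l^{2,1}` and
`(λ − L)a = c`, then `‖a‖_{l²} ≤ M ‖c‖_{l^{2,1}}`. -/
theorem left_shift_resolvent_estimate :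
    ∃ M : ℝ, 0 < M ∧
      ∀ (lam : ℂ), 1 ≤ ‖lam‖ →
        ∀ a c : ℕ → ℂ,
          Summable (fun j => ‖a j‖ ^ 2) →
          Summable (fun j : ℕ => (1 + (j : ℝ)) ^ 2 * ‖c j‖ ^ 2) →
          (∀ j, lam * a j - a (j + 1) = c j) →
          Real.sqrt (∑' j, ‖a j‖ ^ 2) ≤
            M * Real.sqrt (∑' j : ℕ, (1 + (j : ℝ)) ^ 2 * ‖c j‖ ^ 2) := by
  refine ⟨4, by norm_num, ?_⟩
  intro lam hlam a c ha hc hrec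
  set K : ℕ → ℝ := fun i => ‖c i‖ with hKdef
  have hK0 : ∀ i, 0 ≤ K i := fun i => norm_nonneg _
  have hK2 : Summable (fun i : ℕ => (1+(i:ℝ))^2 * K i ^2) := hc
  have hKs : Summable K := summable_norm_of_weighted K hK0 hK2
  have hKshift : ∀ j, Summable (fun m => K (j+m)) := fun j =>
    ((summable_nat_add_iff j).2 hKs).congr (fun n => by rw [add_comm])
  have hnorm : 1 ≤ ‖lam‖ := by exact hlam
  have hlam0 : lam ≠ 0 := by
    intro h
    rw [h] at hnorm; simp at hnorm; linarith
  have hinv : ‖lam⁻¹‖ ≤ 1 := by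
    rw [norm_inv]; exact inv_le_one_of_one_le₀ hnorm
  -- the explicit solution g
  set g : ℕ → ℂ := fun j => ∑' m, lam⁻¹^(m+1) * c (j+m) with hgdef
  have hterm : ∀ j m, ‖lam⁻¹^(m+1) * c (j+m)‖ ≤ K (j+m) := by
    intro j m
    rw [norm_mul, norm_pow]
    exact mul_le_of_le_one_left (norm_nonneg _) (pow_le_one₀ (norm_nonneg _) hinv)
  have hterm' : ∀ j m, ‖lam⁻¹^m * c (j+m)‖ ≤ K (j+m) := by
    intro j m
    rw [norm_mul, norm_pow]
    exact mul_le_of_le_one_left (norm_nonneg _) (pow_le_one₀ (norm_nonneg _) hinv)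
  have hgs : ∀ j, Summable (fun m => lam⁻¹^(m+1) * c (j+m)) :=
    fun j => Summable.of_norm_bounded (hKshift j) (hterm j)
  have hgs' : ∀ j, Summable (fun m => lam⁻¹^m * c (j+m)) :=
    fun j => Summable.of_norm_bounded (hKshift j) (hterm' j)
  have hgn : ∀ j, Summable (fun m => ‖lam⁻¹^(m+1) * c (j+m)‖) :=
    fun j => Summable.of_nonneg_of_le (fun m => norm_nonneg _) (hterm j) (hKshift j)
  have hg_norm : ∀ j, ‖g j‖ ≤ ∑' m, K (j+m) := by
    intro j
    calc ‖g j‖ ≤ ∑' m, ‖lam⁻¹^(m+1) * c (j+m)‖ := norm_tsum_le_tsum_norm (hgn j)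
      _ ≤ ∑' m, K (j+m) := Summable.tsum_le_tsum (hterm j) (hgn j) (hKshift j)
  have hrec_g : ∀ j, lam * g j - g (j+1) = c j := by
    intro j
    have h1 : lam * g j = ∑' m, lam⁻¹^m * c (j+m) := by
      rw [hgdef]
      simp only []
      rw [← tsum_mul_left]
      refine tsum_congr fun m => ?_
      have hc1 : lam * lam⁻¹ = 1 := mul_inv_cancel₀ hlam0
      calc lam * (lam⁻¹^(m+1) * c (j+m)) = (lam * lam⁻¹) * (lam⁻¹^m * c (j+m)) := by
            rw [pow_succ]; ring
        _ = lam⁻¹^m * c (j+m) := by rw [hc1, one_mul]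
    have h2 : ∑' m, lam⁻¹^m * c (j+m) = c j + g (j+1) := by
      rw [Summable.tsum_eq_zero_add (hgs' j)]
      congr 1
      · simp
      · rw [hgdef]
        simp only []
        exact tsum_congr fun m => by rw [show j+(m+1) = (j+1)+m by omega]
    rw [h1, h2]; ring
  -- uniqueness: a = g
  set d : ℕ → ℂ := fun j => a j - g j with hddef
  have hd : ∀ j, d (j+1) = lam * d j := by
    intro j
    simp only [hddef]
    linear_combination hrec_g j - hrec j
  have hdpow : ∀ j, d j = lam^j * d 0 := by
    intro j
    induction j with
    | zero => simp
    | succ n ih => rw [hd n, ih, pow_succ]; ring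
  have ta : Tendsto (fun j => ‖a j‖) atTop (nhds 0) := by
    have h1 := ha.tendsto_atTop_zero
    have h2 := (Real.continuous_sqrt.tendsto 0).comp h1
    simp only [Function.comp_def, Real.sqrt_zero] at h2
    exact h2.congr fun j => Real.sqrt_sq (norm_nonneg _)
  have tail : Tendsto (fun j => ∑' m, K (j+m)) atTop (nhds 0) :=
    (tendsto_sum_nat_add K).congr fun j => tsum_congr fun m => by rw [add_comm]
  have tg : Tendsto (fun j => ‖g j‖) atTop (nhds 0) :=
    squeeze_zero (fun j => norm_nonneg _) hg_norm tail
  have td : Tendsto (fun j => ‖d j‖) atTop (nhds 0) := by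
    have hsum : Tendsto (fun j => ‖a j‖ + ‖g j‖) atTop (nhds 0) := by
      simpa using ta.add tg
    exact squeeze_zero (fun j => norm_nonneg _) (fun j => norm_sub_le _ _) hsum
  have hd0 : d 0 = 0 := by
    have hge : ∀ j, ‖d 0‖ ≤ ‖d j‖ := by
      intro j
      rw [hdpow j, norm_mul, norm_pow]
      calc ‖d 0‖ = 1 * ‖d 0‖ := (one_mul _).symm
        _ ≤ ‖lam‖^j * ‖d 0‖ :=
          mul_le_mul_of_nonneg_right (one_le_pow₀ hnorm) (norm_nonneg _)
    have : ‖d 0‖ ≤ 0 := ge_of_tendsto' td hge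
    simpa using le_antisymm this (norm_nonneg _)
  have key : ∀ j, ‖a j‖ ≤ ∑' m, K (j+m) := by
    intro j
    have h := hdpow j
    rw [hd0, mul_zero] at h
    have hag : a j = g j := sub_eq_zero.1 h
    rw [hag]
    exact hg_norm j
  -- apply the main inequality
  have main : ∑' j, ‖a j‖^2 ≤ 12 * ∑' i : ℕ, (1+(i:ℝ))^2 * K i ^2 :=
    copson K hK0 hKs hK2 (fun j => ‖a j‖) (fun j => norm_nonneg _) ha key
  set S : ℝ := ∑' i : ℕ, (1+(i:ℝ))^2 * K i ^2 with hSdef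
  have hS0 : 0 ≤ S := tsum_nonneg fun i => by positivity
  calc Real.sqrt (∑' j, ‖a j‖ ^ 2) ≤ Real.sqrt (16 * S) :=
        Real.sqrt_le_sqrt (by linarith)
    _ = 4 * Real.sqrt S := by
        rw [Real.sqrt_mul (by norm_num) S,
          show Real.sqrt 16 = 4 by
            rw [show (16:ℝ) = 4^2 by norm_num, Real.sqrt_sq (by norm_num)]]
end
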